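/- Let K be a field of characteristic zero, A a K-algebra (not necessarily unital or commutative), and D a locally finite K-derivation of A. If e is an idempotent of A lying in both the kernel of D and the image of D, then the two-sided ideal of A generated by e is contained in the image of D. -/

import Mathlib

open Polynomial TensorProduct Pointwise

private def epow {A : Type*} [Mul A] (e c : A) : ℕ → A
  | 0 => e
  | n + 1 => c * epow e c n

private noncomputable def nuMap (K : Type*) {A : Type*} [Field K] [NonUnitalRing A] [Module K A]
    [SMulCommClass K A A] [IsScalarTower K A A] (w : A) (U V : Submodule K A) :
    (↥U ⊗[K] ↥V) →ₗ[K] A :=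
  TensorProduct.lift <| LinearMap.mk₂ K (fun x y => (x : A) * (w * (y : A)))
    (fun m₁ m₂ n => by simp [add_mul])
    (fun c m n => by simp [smul_mul_assoc])
    (fun m n₁ n₂ => by simp [mul_add])
    (fun c m n => by simp [mul_smul_comm])

@[simp] private lemma nuMap_tmul {K : Type*} {A : Type*} [Field K] [NonUnitalRing A] [Module K A]
    [SMulCommClass K A A] [IsScalarTower K A A] (w : A) (U V : Submodule K A) (x : U) (y : V) :
    nuMap K w U V (x ⊗ₜ y) = (x : A) * (w * (y : A)) := rfl

private theorem key_lemma
    {K : Type*} [Field K] [CharZero K]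
    {A : Type*} [NonUnitalRing A] [Module K A] [SMulCommClass K A A] [IsScalarTower K A A]
    (D : A →ₗ[K] A)
    (hder : ∀ a b : A, D (a * b) = D a * b + a * D b)
    (hLF : ∀ a : A,
      FiniteDimensional K (Submodule.span K (Set.range fun i : ℕ => (D ^ i) a)))
    (e : A) (hidem : e * e = e) (hker : D e = 0) (him : e ∈ LinearMap.range D)
    (u v : A) : u * (e * v) ∈ LinearMap.range D := by
  obtain ⟨c', hc'⟩ := him
  set c : A := e * c' * e with hcdef
  have hec : e * c = c := by
    rw [hcdef, ← mul_assoc, ← mul_assoc, hidem]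
  have hce : c * e = c := by
    rw [hcdef, mul_assoc, mul_assoc, hidem, ← mul_assoc]
  have hDc : D c = e := by
    simp only [hcdef, hder, hker, hc', zero_mul, mul_zero, add_zero, zero_add, hidem]
  -- epow basic facts
  have hepow_e : ∀ n, e * epow e c n = epow e c n := by
    intro n
    induction n with
    | zero => exact hidem
    | succ n ih => show e * (c * epow e c n) = c * epow e c n; rw [← mul_assoc, hec]
  have hDepow : ∀ n : ℕ, D (epow e c (n + 1)) = ((n : K) + 1) • epow e c n := by
    intro n
    induction n with
    | zero =>
      show D (c * epow e c 0) = _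
      show D (c * e) = _
      rw [hce, hDc]
      simp [epow]
    | succ n ih =>
      show D (c * epow e c (n + 1)) = _
      rw [hder, hDc, hepow_e, ih, mul_smul_comm]
      show epow e c (n + 1) + ((n : K) + 1) • (c * epow e c n) = _
      have : c * epow e c n = epow e c (n + 1) := rfl
      rw [this, Nat.cast_add, Nat.cast_one, add_smul, add_smul, one_smul]
      module
  -- the orbit submodules
  set U := Submodule.span K (Set.range fun i : ℕ => (D ^ i) u) with hUdef
  set V := Submodule.span K (Set.range fun i : ℕ => (D ^ i) v) with hVdef
  haveI : FiniteDimensional K U := hLF u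
  haveI : FiniteDimensional K V := hLF v
  have hinv : ∀ a : A, ∀ x ∈ Submodule.span K (Set.range fun i : ℕ => (D ^ i) a),
      D x ∈ Submodule.span K (Set.range fun i : ℕ => (D ^ i) a) := by
    intro a x hx
    have hmap : Submodule.map D (Submodule.span K (Set.range fun i : ℕ => (D ^ i) a)) ≤
        Submodule.span K (Set.range fun i : ℕ => (D ^ i) a) := by
      rw [Submodule.map_span]
      apply Submodule.span_le.mpr
      rintro - ⟨-, ⟨i, rfl⟩, rfl⟩
      apply Submodule.subset_span
      exact ⟨i + 1, by show (D ^ (i + 1)) a = D ((D ^ i) a); rw [pow_succ', Module.End.mul_apply]⟩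
    exact hmap ⟨x, hx, rfl⟩
  have hUinv : ∀ x ∈ U, D x ∈ U := hinv u
  have hVinv : ∀ x ∈ V, D x ∈ V := hinv v
  set DU : U →ₗ[K] U := D.restrict hUinv with hDUdef
  set DV : V →ₗ[K] V := D.restrict hVinv with hDVdef
  set Δ : (↥U ⊗[K] ↥V) →ₗ[K] (↥U ⊗[K] ↥V) :=
    LinearMap.rTensor ↥V DU + LinearMap.lTensor ↥U DV with hΔdef
  have hΔtmul : ∀ (x : U) (y : V), Δ (x ⊗ₜ[K] y) = (DU x) ⊗ₜ[K] y + x ⊗ₜ[K] (DV y) := by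
    intro x y
    rw [hΔdef]
    simp
  set ν : ℕ → ((↥U ⊗[K] ↥V) →ₗ[K] A) := fun k => nuMap K (epow e c k) U V with hνdef
  -- the two key differential identities
  have hnu0 : ∀ t : ↥U ⊗[K] ↥V, D (ν 0 t) = ν 0 (Δ t) := by
    intro t
    induction t using TensorProduct.induction_on with
    | zero => simp
    | tmul x y =>
      rw [hΔtmul, map_add]
      show D ((x : A) * (epow e c 0 * (y : A))) = _
      show _ = (D (x : A)) * (epow e c 0 * (y : A)) + (x : A) * (epow e c 0 * D (y : A))
      rw [hder, hder]
      show D ((x : A)) * (e * (y : A)) + (x : A) * (D e * (y : A) + e * D ((y : A))) = _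
      rw [hker, zero_mul, zero_add]
      rfl
    | add s t hs ht =>
      simp only [map_add, hs, ht]
  have hnusucc : ∀ (k : ℕ) (t : ↥U ⊗[K] ↥V),
      D (ν (k + 1) t) = ν (k + 1) (Δ t) + ((k : K) + 1) • ν k t := by
    intro k t
    induction t using TensorProduct.induction_on with
    | zero => simp
    | tmul x y =>
      rw [hΔtmul, map_add]
      show D ((x : A) * (epow e c (k + 1) * (y : A))) =
        ((D (x : A)) * (epow e c (k + 1) * (y : A)) +
          (x : A) * (epow e c (k + 1) * D ((y : A)))) +
          ((k : K) + 1) • ((x : A) * (epow e c k * (y : A)))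
      rw [hder, hder, hDepow, smul_mul_assoc, mul_add, mul_smul_comm]
      abel
    | add s t hs ht =>
      simp only [map_add, hs, ht, smul_add]
      abel
  -- nilpotent part lands in the range
  have hnil : ∀ (r : ℕ) (t : ↥U ⊗[K] ↥V), (Δ ^ r) t = 0 → ∀ k, ν k t ∈ LinearMap.range D := by
    intro r
    induction r with
    | zero =>
      intro t ht k
      rw [pow_zero, Module.End.one_apply] at ht
      rw [ht, map_zero]
      exact zero_mem _
    | succ r ih =>
      intro t ht k
      have hΔt : (Δ ^ r) (Δ t) = 0 := by
        rw [← Module.End.mul_apply, ← pow_succ]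
        exact ht
      have h2 : ((k : K) + 1) • ν k t ∈ LinearMap.range D := by
        have : ((k : K) + 1) • ν k t = D (ν (k + 1) t) - ν (k + 1) (Δ t) := by
          rw [hnusucc k t]; abel
        rw [this]
        exact sub_mem (LinearMap.mem_range_self D _) (ih (Δ t) hΔt (k + 1))
      have hk : ((k : K) + 1) ≠ 0 := by
        exact Nat.cast_add_one_ne_zero k
      have h3 := Submodule.smul_mem (LinearMap.range D) ((k : K) + 1)⁻¹ h2
      rwa [inv_smul_smul₀ hk] at h3
  -- now the polynomial decomposition
  have hu : u ∈ U := Submodule.subset_span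
    ⟨0, by show (D ^ 0) u = u; rw [pow_zero, Module.End.one_apply]⟩
  have hv : v ∈ V := Submodule.subset_span
    ⟨0, by show (D ^ 0) v = v; rw [pow_zero, Module.End.one_apply]⟩
  set t0 : ↥U ⊗[K] ↥V := (⟨u, hu⟩ : U) ⊗ₜ[K] (⟨v, hv⟩ : V) with ht0def
  have hfin : Module.Finite K (↥U ⊗[K] ↥V) := Module.Finite.tensorProduct K ↥U ↥V
  have hP : (aeval Δ) (LinearMap.charpoly Δ) = 0 := LinearMap.aeval_self_charpoly Δ
  have hP0 : LinearMap.charpoly Δ ≠ 0 := (LinearMap.charpoly_monic Δ).ne_zero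
  obtain ⟨Q, hQ, hndvd⟩ :=
    (LinearMap.charpoly Δ).exists_eq_pow_rootMultiplicity_mul_and_not_dvd hP0 0
  rw [map_zero, sub_zero] at hQ hndvd
  set r := (LinearMap.charpoly Δ).rootMultiplicity 0 with hrdef
  have hq0 : Q.coeff 0 ≠ 0 := fun h => hndvd (Polynomial.X_dvd_iff.mpr h)
  obtain ⟨R, hR⟩ : (X : K[X]) ∣ (Q - C (Q.coeff 0)) := Polynomial.X_dvd_iff.mpr (by simp)
  have h1 : (Δ ^ r) ((aeval Δ Q) t0) = 0 := by
    have : (aeval Δ) (LinearMap.charpoly Δ) t0 = 0 := by rw [hP]; rfl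
    rw [hQ, map_mul, map_pow, aeval_X, Module.End.mul_apply] at this
    exact this
  have h2 : ν 0 ((aeval Δ Q) t0) ∈ LinearMap.range D := hnil r _ h1 0
  have h3 : (aeval Δ Q) t0 = Q.coeff 0 • t0 + Δ ((aeval Δ R) t0) := by
    have hQ' : Q = C (Q.coeff 0) + X * R := by rw [← hR]; ring
    rw [hQ', map_add, map_mul, aeval_X, aeval_C, LinearMap.add_apply, Module.End.mul_apply,
      Module.algebraMap_end_apply]
    simp
  have h4 : Q.coeff 0 • ν 0 t0 ∈ LinearMap.range D := by
    have : Q.coeff 0 • ν 0 t0 = ν 0 ((aeval Δ Q) t0) - D (ν 0 ((aeval Δ R) t0)) := by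
      rw [h3, map_add, map_smul, hnu0]
      abel
    rw [this]
    exact sub_mem h2 (LinearMap.mem_range_self D _)
  have h5 := Submodule.smul_mem (LinearMap.range D) (Q.coeff 0)⁻¹ h4
  rw [inv_smul_smul₀ hq0] at h5
  have : ν 0 t0 = u * (e * v) := by
    rw [hνdef, ht0def]
    show nuMap K (epow e c 0) U V _ = _
    rw [nuMap_tmul]
    rfl
  rwa [this] at h5

theorem image_of_locally_finite_derivation_contains_ideal_of_idempotent
    {K : Type*} [Field K] [CharZero K]
    {A : Type*} [NonUnitalRing A] [Module K A] [SMulCommClass K A A] [IsScalarTower K A A]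
    (D : A →ₗ[K] A)
    (hder : ∀ a b : A, D (a * b) = D a * b + a * D b)
    (hLF : ∀ a : A,
      FiniteDimensional K (Submodule.span K (Set.range fun i : ℕ => (D ^ i) a)))
    (e : A) (hidem : e * e = e) (hker : D e = 0) (him : e ∈ LinearMap.range D) :
    ∀ x ∈ TwoSidedIdeal.span {e}, x ∈ LinearMap.range D := by
  intro x hx
  have key := key_lemma D hder hLF e hidem hker him
  rw [TwoSidedIdeal.mem_span_iff_mem_addSubgroup_closure_nonunital] at hx
  induction hx using AddSubgroup.closure_induction with
  | mem y hy =>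
    rcases hy with ((hy | hy) | hy) | hy
    · rw [Set.mem_singleton_iff] at hy
      rw [hy]
      have := key e e
      rwa [hidem, hidem] at this
    · obtain ⟨a, ha, b, -, rfl⟩ := hy
      rw [Set.mem_singleton_iff] at ha
      rw [ha]
      have := key e b
      rwa [← mul_assoc, hidem] at this
    · obtain ⟨b, -, a, ha, rfl⟩ := hy
      rw [Set.mem_singleton_iff] at ha
      rw [ha]
      have := key b e
      rwa [hidem] at this
    · obtain ⟨-, ⟨b, -, a, ha, rfl⟩, b', -, rfl⟩ := hy
      rw [Set.mem_singleton_iff] at ha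
      rw [ha]
      have := key b b'
      rwa [← mul_assoc] at this
  | zero => exact zero_mem _
  | add a b _ _ ha hb => exact add_mem ha hb
  | neg a _ ha => exact neg_mem ha
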